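/- Let S be a random walk with i.i.d. increments ε_i satisfying E[ε_0] = 0, Var(ε_0) = σ² > 0, and η₀ ≤ α_0 ≤ 1-η₀ a.s. (equivalently |ε_0| ≤ I := log((1-η₀)/η₀)). Suppose furthermore Q[ε_0 < -I/4] > 0. Let a = I/4, i ≥ 1, and define H_{ia,k} to be the k-th visit time of S to the interval [(i-1)a, i a), and V_0^- the first time S is negative. Then Q[H_{a,k} < V_0^-] ≤ Q[ε_0 ≥ 0] · (1 - Q[ε_0 < -I/4])^{k-1}. -/

import Mathlib

open MeasureTheory Finset ProbabilityTheory
open scoped ENNReal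

noncomputable section

/-- Partial sums `S_m = Σ_{i=1}^m ε_i`. -/
def pSum {Ω : Type*} (ε : ℕ → Ω → ℝ) (m : ℕ) (ω : Ω) : ℝ :=
  ∑ i ∈ Finset.Icc 1 m, ε i ω

/-- `H_{[lo,hi),k}`: time of the `k`-th visit of the partial-sum walk to `[lo, hi)`,
with `H_{·,0} = 0`. -/
def visitTime {Ω : Type*} (ε : ℕ → Ω → ℝ) (lo hi : ℝ) : ℕ → Ω → ℕ∞
  | 0, _ => 0
  | s + 1, ω =>
      sInf {t : ℕ∞ | ∃ m : ℕ,
        visitTime ε lo hi s ω < (m : ℕ∞) ∧ pSum ε m ω ∈ Set.Ico lo hi ∧ t = m}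

/-- `V_0^- = inf {m ≥ 1 : S_m < 0}` as an extended natural. -/
def Vneg {Ω : Type*} (ε : ℕ → Ω → ℝ) (ω : Ω) : ℕ∞ :=
  sInf {t : ℕ∞ | ∃ m : ℕ, 1 ≤ m ∧ pSum ε m ω < 0 ∧ t = m}

lemma sInf_image_nat (A : Set ℕ) (hA : A.Nonempty) :
    sInf ((fun m : ℕ => (m : ℕ∞)) '' A) = ((sInf A : ℕ) : ℕ∞) := by
  apply IsLeast.csInf_eq
  constructor
  · exact ⟨_, Nat.sInf_mem hA, rfl⟩
  · rintro t ⟨m, hm, rfl⟩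
    exact Nat.cast_le.mpr (Nat.sInf_le hm)

lemma sInf_image_nat_eq_iff {A : Set ℕ} {n : ℕ} :
    sInf ((fun m : ℕ => (m : ℕ∞)) '' A) = (n : ℕ∞) ↔ n ∈ A ∧ ∀ m ∈ A, n ≤ m := by
  constructor
  · intro h
    rcases A.eq_empty_or_nonempty with rfl | hA
    · simp at h
    · rw [sInf_image_nat A hA, Nat.cast_inj] at h
      exact ⟨h ▸ Nat.sInf_mem hA, fun m hm => h ▸ Nat.sInf_le hm⟩
  · rintro ⟨hn, hmin⟩
    apply IsLeast.csInf_eq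
    exact ⟨⟨n, hn, rfl⟩, by rintro t ⟨m, hm, rfl⟩; exact Nat.cast_le.mpr (hmin m hm)⟩

lemma visitTime_succ_eq_iff {Ω : Type*} (ε : ℕ → Ω → ℝ) (lo hi : ℝ) (k : ℕ) (ω : Ω) (n : ℕ) :
    visitTime ε lo hi (k+1) ω = (n : ℕ∞) ↔
      (visitTime ε lo hi k ω < (n:ℕ∞) ∧ pSum ε n ω ∈ Set.Ico lo hi ∧
        ∀ m : ℕ, visitTime ε lo hi k ω < (m:ℕ∞) → pSum ε m ω ∈ Set.Ico lo hi → n ≤ m) := by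
  have hset : {t : ℕ∞ | ∃ m : ℕ,
        visitTime ε lo hi k ω < (m : ℕ∞) ∧ pSum ε m ω ∈ Set.Ico lo hi ∧ t = m}
      = (fun m : ℕ => (m : ℕ∞)) '' {m | visitTime ε lo hi k ω < (m : ℕ∞) ∧ pSum ε m ω ∈ Set.Ico lo hi} := by
    ext t
    simp only [Set.mem_setOf_eq, Set.mem_image]
    constructor
    · rintro ⟨m, h1, h2, rfl⟩; exact ⟨m, ⟨h1, h2⟩, rfl⟩
    · rintro ⟨m, ⟨h1, h2⟩, rfl⟩; exact ⟨m, h1, h2, rfl⟩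
  show sInf _ = _ ↔ _
  rw [hset, sInf_image_nat_eq_iff]
  simp only [Set.mem_setOf_eq, and_imp]
  tauto

lemma lt_Vneg_iff {Ω : Type*} (ε : ℕ → Ω → ℝ) (ω : Ω) (n : ℕ) :
    (n:ℕ∞) < Vneg ε ω ↔ ∀ m : ℕ, 1 ≤ m → m ≤ n → 0 ≤ pSum ε m ω := by
  constructor
  · intro h m hm1 hmn
    by_contra hneg
    push_neg at hneg
    have : Vneg ε ω ≤ (m : ℕ∞) := sInf_le ⟨m, hm1, hneg, rfl⟩
    have : Vneg ε ω ≤ (n : ℕ∞) := this.trans (by exact_mod_cast hmn)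
    exact absurd h (not_lt.mpr this)
  · intro h
    by_contra hle
    push_neg at hle
    -- Vneg ≤ n, so Vneg finite, and it's a member
    have hne : Vneg ε ω ≠ ⊤ := fun ht => by simp [ht] at hle
    have hset : {t : ℕ∞ | ∃ m : ℕ, 1 ≤ m ∧ pSum ε m ω < 0 ∧ t = m}
        = (fun m : ℕ => (m : ℕ∞)) '' {m | 1 ≤ m ∧ pSum ε m ω < 0} := by
      ext t; simp only [Set.mem_setOf_eq, Set.mem_image]
      constructor
      · rintro ⟨m, h1, h2, rfl⟩; exact ⟨m, ⟨h1, h2⟩, rfl⟩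
      · rintro ⟨m, ⟨h1, h2⟩, rfl⟩; exact ⟨m, h1, h2, rfl⟩
    have hA : {m : ℕ | 1 ≤ m ∧ pSum ε m ω < 0}.Nonempty := by
      by_contra hemp
      rw [Set.not_nonempty_iff_eq_empty] at hemp
      have : Vneg ε ω = ⊤ := by rw [Vneg, hset, hemp]; simp
      exact hne this
    have hv : Vneg ε ω = ((sInf {m : ℕ | 1 ≤ m ∧ pSum ε m ω < 0} : ℕ) : ℕ∞) := by
      rw [Vneg, hset, sInf_image_nat _ hA]
    set j : ℕ := sInf {m : ℕ | 1 ≤ m ∧ pSum ε m ω < 0} with hj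
    have hjmem := Nat.sInf_mem hA
    have hjn : j ≤ n := by
      rw [hv] at hle; exact_mod_cast hle
    exact absurd (h j hjmem.1 hjn) (not_le.mpr hjmem.2)

lemma pSum_congr {Ω Ω' : Type*} {ε : ℕ → Ω → ℝ} {δ : ℕ → Ω' → ℝ} {ω : Ω} {ω' : Ω'} {n : ℕ}
    (h : ∀ i, 1 ≤ i → i ≤ n → ε i ω = δ i ω') {m : ℕ} (hm : m ≤ n) :
    pSum ε m ω = pSum δ m ω' := by
  refine Finset.sum_congr rfl fun i hi => ?_
  rw [Finset.mem_Icc] at hi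
  exact h i hi.1 (hi.2.trans hm)

lemma visitTime_congr_aux {Ω Ω' : Type*} {ε : ℕ → Ω → ℝ} {δ : ℕ → Ω' → ℝ} (lo hi : ℝ)
    {ω : Ω} {ω' : Ω'} {n : ℕ} (h : ∀ i, 1 ≤ i → i ≤ n → ε i ω = δ i ω') :
    ∀ k (j : ℕ), j ≤ n → visitTime ε lo hi k ω = (j:ℕ∞) → visitTime δ lo hi k ω' = (j:ℕ∞) := by
  intro k
  induction k with
  | zero => intro j _ hj; exact hj
  | succ k ih =>
    intro j hjn hv
    rw [visitTime_succ_eq_iff] at hv ⊢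
    obtain ⟨h1, h2, h3⟩ := hv
    -- visitTime ε k ω is some t < j
    have hne : visitTime ε lo hi k ω ≠ ⊤ := (h1.trans_le le_top).ne
    obtain ⟨t, ht⟩ : ∃ t : ℕ, visitTime ε lo hi k ω = (t:ℕ∞) :=
      ⟨(visitTime ε lo hi k ω).toNat, (ENat.coe_toNat hne).symm⟩
    have htj : t < j := by rw [ht] at h1; exact_mod_cast h1
    have ht' : visitTime δ lo hi k ω' = (t:ℕ∞) := ih t (htj.le.trans hjn) ht
    refine ⟨?_, ?_, ?_⟩
    · rw [ht']; exact_mod_cast htj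
    · rwa [← pSum_congr h hjn]
    · intro m hm hPm
      rcases le_or_gt m n with hmn | hmn
      · refine h3 m ?_ ?_
        · rw [ht]; rwa [ht'] at hm
        · rwa [pSum_congr h hmn]
      · exact hjn.trans hmn.le

lemma visitTime_congr {Ω Ω' : Type*} {ε : ℕ → Ω → ℝ} {δ : ℕ → Ω' → ℝ} (lo hi : ℝ)
    {ω : Ω} {ω' : Ω'} {n : ℕ} (h : ∀ i, 1 ≤ i → i ≤ n → ε i ω = δ i ω')
    (k : ℕ) (j : ℕ) (hj : j ≤ n) :
    visitTime ε lo hi k ω = (j:ℕ∞) ↔ visitTime δ lo hi k ω' = (j:ℕ∞) :=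
  ⟨visitTime_congr_aux lo hi h k j hj,
   visitTime_congr_aux lo hi (fun i h1 h2 => (h i h1 h2).symm) k j hj⟩

lemma measurable_pSum {Ω : Type*} [MeasurableSpace Ω] {ε : ℕ → Ω → ℝ}
    (hmeas : ∀ i, Measurable (ε i)) (m : ℕ) : Measurable (pSum ε m) :=
  Finset.measurable_sum _ fun i _ => hmeas i

lemma measurableSet_visitTime_eq {Ω : Type*} [MeasurableSpace Ω] {ε : ℕ → Ω → ℝ}
    (hmeas : ∀ i, Measurable (ε i)) (lo hi : ℝ) :
    ∀ k (n : ℕ), MeasurableSet {ω | visitTime ε lo hi k ω = (n:ℕ∞)} := by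
  intro k
  induction k with
  | zero =>
    intro n
    rcases Nat.eq_zero_or_pos n with rfl | hn
    · convert MeasurableSet.univ using 1
      ext ω; simp [visitTime]
    · convert MeasurableSet.empty using 1
      ext ω
      simp only [Set.mem_setOf_eq, Set.mem_empty_iff_false, iff_false]
      intro hh
      have : (0:ℕ∞) = (n:ℕ∞) := hh
      exact absurd (Nat.cast_injective this).symm (Nat.pos_iff_ne_zero.mp hn)
  | succ k ih =>
    intro n
    have heq : {ω | visitTime ε lo hi (k+1) ω = (n:ℕ∞)}
        = ⋃ t ∈ Finset.range n, ({ω | visitTime ε lo hi k ω = (t:ℕ∞)}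
            ∩ {ω | pSum ε n ω ∈ Set.Ico lo hi}
            ∩ ⋂ m ∈ Finset.Ioo t n, {ω | pSum ε m ω ∉ Set.Ico lo hi}) := by
      ext ω
      simp only [Set.mem_setOf_eq, Set.mem_iUnion, Set.mem_inter_iff, Set.mem_iInter,
        Finset.mem_range, Finset.mem_Ioo]
      rw [visitTime_succ_eq_iff]
      constructor
      · rintro ⟨h1, h2, h3⟩
        have hne : visitTime ε lo hi k ω ≠ ⊤ := (h1.trans_le le_top).ne
        obtain ⟨t, ht⟩ : ∃ t : ℕ, visitTime ε lo hi k ω = (t:ℕ∞) :=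
          ⟨(visitTime ε lo hi k ω).toNat, (ENat.coe_toNat hne).symm⟩
        have htn : t < n := by rw [ht] at h1; exact_mod_cast h1
        refine ⟨t, htn, ⟨ht, h2⟩, fun m hm hP => ?_⟩
        have := h3 m (by rw [ht]; exact_mod_cast hm.1) hP
        omega
      · rintro ⟨t, htn, ⟨ht, h2⟩, h3⟩
        refine ⟨by rw [ht]; exact_mod_cast htn, h2, fun m hm hP => ?_⟩
        rw [ht] at hm
        have htm : t < m := by exact_mod_cast hm
        by_contra hc
        push_neg at hc
        exact h3 m ⟨htm, hc⟩ hP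
    rw [heq]
    refine Finset.measurableSet_biUnion _ fun t _ => MeasurableSet.inter
      (MeasurableSet.inter (ih t) ((measurable_pSum hmeas n) measurableSet_Ico))
      (Finset.measurableSet_biInter _ fun m _ =>
        ((measurable_pSum hmeas m) measurableSet_Ico).compl)

set_option linter.unusedSectionVars false
set_option linter.unusedVariables false

section Main
variable {Ω : Type*} [MeasurableSpace Ω] (Q : Measure Ω) [IsProbabilityMeasure Q]
  (a : ℝ) (ε : ℕ → Ω → ℝ)

lemma measurableSet_lt_Vneg (hmeas : ∀ i, Measurable (ε i)) (n : ℕ) :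
    MeasurableSet {ω | (n:ℕ∞) < Vneg ε ω} := by
  have : {ω | (n:ℕ∞) < Vneg ε ω} = ⋂ m ∈ Finset.Icc 1 n, {ω | 0 ≤ pSum ε m ω} := by
    ext ω
    simp only [Set.mem_setOf_eq, Set.mem_iInter, Finset.mem_Icc]
    rw [lt_Vneg_iff]
    exact ⟨fun h m hm => h m hm.1 hm.2, fun h m h1 h2 => h m ⟨h1, h2⟩⟩
  rw [this]
  exact Finset.measurableSet_biInter _ fun m _ =>
    measurableSet_le measurable_const (measurable_pSum hmeas m)

lemma measurableSet_Bkn (hmeas : ∀ i, Measurable (ε i)) (k n : ℕ) :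
    MeasurableSet ({ω | visitTime ε 0 a k ω = (n:ℕ∞)} ∩ {ω | (n:ℕ∞) < Vneg ε ω}) :=
  (measurableSet_visitTime_eq hmeas 0 a k n).inter (measurableSet_lt_Vneg ε hmeas n)

lemma prod_lemma (hmeas : ∀ i, Measurable (ε i))
    (hindep : iIndepFun ε Q) (k n : ℕ) :
    Q (({ω | visitTime ε 0 a k ω = (n:ℕ∞)} ∩ {ω | (n:ℕ∞) < Vneg ε ω})
        ∩ ε (n+1) ⁻¹' Set.Ici (-a))
      = Q ({ω | visitTime ε 0 a k ω = (n:ℕ∞)} ∩ {ω | (n:ℕ∞) < Vneg ε ω})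
          * Q (ε (n+1) ⁻¹' Set.Ici (-a)) := by
  classical
  set δ : ℕ → (↥(Finset.Icc 1 n) → ℝ) → ℝ :=
    fun i x => if h : i ∈ Finset.Icc 1 n then x ⟨i, h⟩ else 0 with hδ
  have hδmeas : ∀ i, Measurable (δ i) := by
    intro i
    by_cases h : i ∈ Finset.Icc 1 n
    · have he : δ i = fun x => x ⟨i, h⟩ := by funext x; exact dif_pos h
      rw [he]; exact measurable_pi_apply _
    · have he : δ i = fun _ => 0 := by funext x; exact dif_neg h
      rw [he]; exact measurable_const
  set g : Ω → (↥(Finset.Icc 1 n) → ℝ) := fun ω i => ε i ω with hg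
  set C : Set (↥(Finset.Icc 1 n) → ℝ) :=
    {x | visitTime δ 0 a k x = (n:ℕ∞)} ∩ ⋂ m ∈ Finset.Icc 1 n, {x | 0 ≤ pSum δ m x} with hC
  have hCmeas : MeasurableSet C := (measurableSet_visitTime_eq hδmeas 0 a k n).inter
    (Finset.measurableSet_biInter _ fun m _ =>
      measurableSet_le measurable_const (measurable_pSum hδmeas m))
  have hagree : ∀ ω : Ω, ∀ i, 1 ≤ i → i ≤ n → ε i ω = δ i (g ω) := by
    intro ω i h1 h2
    simp [hδ, hg, Finset.mem_Icc, h1, h2]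
  have hBC : {ω | visitTime ε 0 a k ω = (n:ℕ∞)} ∩ {ω | (n:ℕ∞) < Vneg ε ω} = g ⁻¹' C := by
    ext ω
    simp only [hC, Set.mem_inter_iff, Set.mem_setOf_eq, Set.mem_preimage, Set.mem_iInter,
      Finset.mem_Icc]
    rw [lt_Vneg_iff]
    constructor
    · rintro ⟨h1, h2⟩
      exact ⟨(visitTime_congr 0 a (hagree ω) k n le_rfl).mp h1,
        fun m hm => by rw [← pSum_congr (hagree ω) hm.2]; exact h2 m hm.1 hm.2⟩
    · rintro ⟨h1, h2⟩
      exact ⟨(visitTime_congr 0 a (hagree ω) k n le_rfl).mpr h1,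
        fun m hm1 hm2 => by rw [pSum_congr (hagree ω) hm2]; exact h2 m ⟨hm1, hm2⟩⟩
  have hdisj : Disjoint (Finset.Icc 1 n) ({n+1} : Finset ℕ) := by
    simp [Finset.disjoint_singleton_right]
  have hind0 := hindep.indepFun_finset (Finset.Icc 1 n) {n+1} hdisj hmeas
  have hind : IndepFun g (ε (n+1)) Q := by
    have := hind0.comp (measurable_id) (measurable_pi_apply
      (⟨n+1, Finset.mem_singleton_self _⟩ : ↥({n+1} : Finset ℕ)))
    exact this
  rw [hBC]
  exact hind.measure_inter_preimage_eq_mul C (Set.Ici (-a)) hCmeas measurableSet_Ici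

lemma step_ineq (hmeas : ∀ i, Measurable (ε i))
    (hindep : iIndepFun ε Q)
    (hid : ∀ i, IdentDistrib (ε i) (ε 0) Q Q)
    (k : ℕ) (hk : 1 ≤ k) :
    Q {ω | visitTime ε 0 a (k+1) ω < Vneg ε ω}
      ≤ Q (ε 0 ⁻¹' Set.Ici (-a)) * Q {ω | visitTime ε 0 a k ω < Vneg ε ω} := by
  obtain ⟨j, rfl⟩ : ∃ j, k = j + 1 := ⟨k - 1, by omega⟩
  set B : ℕ → Set Ω := fun n =>
    {ω | visitTime ε 0 a (j+1) ω = (n:ℕ∞)} ∩ {ω | (n:ℕ∞) < Vneg ε ω} with hB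
  have hsub : {ω | visitTime ε 0 a (j+1+1) ω < Vneg ε ω}
      ⊆ ⋃ n : ℕ, (B n ∩ ε (n+1) ⁻¹' Set.Ici (-a)) := by
    intro ω hω
    simp only [Set.mem_setOf_eq] at hω
    have hne : visitTime ε 0 a (j+1+1) ω ≠ ⊤ := (hω.trans_le le_top).ne
    obtain ⟨N, hN⟩ : ∃ N : ℕ, visitTime ε 0 a (j+1+1) ω = (N:ℕ∞) :=
      ⟨_, (ENat.coe_toNat hne).symm⟩
    obtain ⟨h1, h2, h3⟩ := (visitTime_succ_eq_iff ε 0 a (j+1) ω N).mp hN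
    have hne2 : visitTime ε 0 a (j+1) ω ≠ ⊤ := (h1.trans_le le_top).ne
    obtain ⟨t, ht⟩ : ∃ t : ℕ, visitTime ε 0 a (j+1) ω = (t:ℕ∞) :=
      ⟨_, (ENat.coe_toNat hne2).symm⟩
    have htN : t < N := by rw [ht] at h1; exact_mod_cast h1
    have htV : (t:ℕ∞) < Vneg ε ω := by
      rw [← ht]
      calc visitTime ε 0 a (j+1) ω < (N:ℕ∞) := h1
        _ = visitTime ε 0 a (j+1+1) ω := hN.symm
        _ < Vneg ε ω := hω
    refine Set.mem_iUnion.mpr ⟨t, ⟨⟨ht, htV⟩, ?_⟩⟩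
    simp only [Set.mem_preimage, Set.mem_Ici]
    by_contra hlt
    push_neg at hlt
    -- pSum t ω ∈ [0, a), so pSum (t+1) ω < 0
    obtain ⟨_, hPt, _⟩ := (visitTime_succ_eq_iff ε 0 a j ω t).mp ht
    have hsucc : pSum ε (t+1) ω = pSum ε t ω + ε (t+1) ω := by
      rw [pSum, Finset.sum_Icc_succ_top (by omega : 1 ≤ t + 1)]; rfl
    have hneg : pSum ε (t+1) ω < 0 := by
      rw [hsucc]
      have := hPt.2
      linarith
    have hVle : Vneg ε ω ≤ ((t+1 : ℕ) : ℕ∞) := sInf_le ⟨t+1, by omega, hneg, rfl⟩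
    have : Vneg ε ω ≤ (N : ℕ∞) := hVle.trans (by exact_mod_cast htN)
    rw [← hN] at this
    exact absurd hω (not_lt.mpr this)
  have hAB : {ω | visitTime ε 0 a (j+1) ω < Vneg ε ω} = ⋃ n : ℕ, B n := by
    ext ω
    simp only [hB, Set.mem_setOf_eq, Set.mem_iUnion, Set.mem_inter_iff]
    constructor
    · intro h
      have hne : visitTime ε 0 a (j+1) ω ≠ ⊤ := (h.trans_le le_top).ne
      exact ⟨_, (ENat.coe_toNat hne).symm, by rw [ENat.coe_toNat hne]; exact h⟩
    · rintro ⟨n, h1, h2⟩; rw [h1]; exact h2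
  have hBdisj : Pairwise (Function.onFun Disjoint B) := by
    intro n m hnm
    apply Set.disjoint_left.mpr
    rintro ω ⟨h1, _⟩ ⟨h2, _⟩
    exact hnm (by exact_mod_cast h1.symm.trans h2)
  have hqn : ∀ i : ℕ, Q (ε i ⁻¹' Set.Ici (-a)) = Q (ε 0 ⁻¹' Set.Ici (-a)) := fun i =>
    (hid i).measure_mem_eq measurableSet_Ici
  calc Q {ω | visitTime ε 0 a (j+1+1) ω < Vneg ε ω}
      ≤ Q (⋃ n : ℕ, (B n ∩ ε (n+1) ⁻¹' Set.Ici (-a))) := measure_mono hsub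
    _ ≤ ∑' n : ℕ, Q (B n ∩ ε (n+1) ⁻¹' Set.Ici (-a)) := measure_iUnion_le _
    _ = ∑' n : ℕ, Q (B n) * Q (ε 0 ⁻¹' Set.Ici (-a)) := by
        refine tsum_congr fun n => ?_
        rw [hB]
        rw [prod_lemma Q a ε hmeas hindep (j+1) n, hqn (n+1)]
    _ = (∑' n : ℕ, Q (B n)) * Q (ε 0 ⁻¹' Set.Ici (-a)) := ENNReal.tsum_mul_right
    _ = Q (⋃ n : ℕ, B n) * Q (ε 0 ⁻¹' Set.Ici (-a)) := by
        rw [measure_iUnion hBdisj (fun n => measurableSet_Bkn a ε hmeas (j+1) n)]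
    _ = Q (ε 0 ⁻¹' Set.Ici (-a)) * Q {ω | visitTime ε 0 a (j+1) ω < Vneg ε ω} := by
        rw [← hAB, mul_comm]

lemma base_ineq (hmeas : ∀ i, Measurable (ε i))
    (hid : ∀ i, IdentDistrib (ε i) (ε 0) Q Q) :
    Q {ω | visitTime ε 0 a 1 ω < Vneg ε ω} ≤ Q {ω | 0 ≤ ε 0 ω} := by
  have hsub : {ω | visitTime ε 0 a 1 ω < Vneg ε ω} ⊆ ε 1 ⁻¹' Set.Ici (0:ℝ) := by
    intro ω hω
    simp only [Set.mem_setOf_eq] at hω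
    have hne : visitTime ε 0 a 1 ω ≠ ⊤ := (hω.trans_le le_top).ne
    obtain ⟨N, hN⟩ : ∃ N : ℕ, visitTime ε 0 a 1 ω = (N:ℕ∞) :=
      ⟨_, (ENat.coe_toNat hne).symm⟩
    obtain ⟨h1, _, _⟩ := (visitTime_succ_eq_iff ε 0 a 0 ω N).mp hN
    have hN1 : 1 ≤ N := by
      by_contra h
      push_neg at h
      interval_cases N
      simp [visitTime] at h1
    have hNV : (N:ℕ∞) < Vneg ε ω := hN ▸ hω
    have := (lt_Vneg_iff ε ω N).mp hNV 1 le_rfl hN1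
    simpa [pSum] using this
  calc Q {ω | visitTime ε 0 a 1 ω < Vneg ε ω} ≤ Q (ε 1 ⁻¹' Set.Ici (0:ℝ)) := measure_mono hsub
    _ = Q (ε 0 ⁻¹' Set.Ici (0:ℝ)) := (hid 1).measure_mem_eq measurableSet_Ici
    _ = Q {ω | 0 ≤ ε 0 ω} := rfl

end Main

theorem stmt12 {Ω : Type*} [MeasurableSpace Ω]
    (Q : Measure Ω) [IsProbabilityMeasure Q]
    (η₀ : ℝ) (hη : η₀ ∈ Set.Ioo (0 : ℝ) (1 / 2))
    (I : ℝ) (hIdef : I = Real.log ((1 - η₀) / η₀))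
    (ε : ℕ → Ω → ℝ) (hmeas : ∀ i, Measurable (ε i))
    (hindep : iIndepFun ε Q)
    (hid : ∀ i, IdentDistrib (ε i) (ε 0) Q Q)
    (σ2 : ℝ) (hσ : 0 < σ2)
    (hmean : ∫ ω, ε 0 ω ∂Q = 0)
    (hvar : variance (ε 0) Q = σ2)
    (hbdd : ∀ᵐ ω ∂Q, |ε 0 ω| ≤ I)
    (hneg : 0 < Q {ω | ε 0 ω < -(I / 4)}) :
    ∀ k : ℕ, 1 ≤ k →
      Q {ω | visitTime ε 0 (I / 4) k ω < Vneg ε ω}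
        ≤ Q {ω | 0 ≤ ε 0 ω} * (1 - Q {ω | ε 0 ω < -(I / 4)}) ^ (k - 1) := by
  have hq1 : Q (ε 0 ⁻¹' Set.Ici (-(I/4))) = 1 - Q {ω | ε 0 ω < -(I/4)} := by
    have : {ω | ε 0 ω < -(I/4)} = ε 0 ⁻¹' Set.Iio (-(I/4)) := rfl
    rw [this, ← Set.compl_Iio, Set.preimage_compl]
    exact prob_compl_eq_one_sub ((hmeas 0) measurableSet_Iio)
  intro k hk
  induction k, hk using Nat.le_induction with
  | base =>
    simpa using base_ineq Q (I/4) ε hmeas hid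
  | succ k hk ih =>
    have hkk : k - 1 + 1 = k := Nat.succ_pred_eq_of_pos hk
    calc Q {ω | visitTime ε 0 (I/4) (k+1) ω < Vneg ε ω}
        ≤ Q (ε 0 ⁻¹' Set.Ici (-(I/4))) * Q {ω | visitTime ε 0 (I/4) k ω < Vneg ε ω} :=
          step_ineq Q (I/4) ε hmeas hindep hid k hk
      _ ≤ Q (ε 0 ⁻¹' Set.Ici (-(I/4)))
            * (Q {ω | 0 ≤ ε 0 ω} * (1 - Q {ω | ε 0 ω < -(I / 4)}) ^ (k - 1)) :=
          mul_le_mul_right ih _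
      _ = Q {ω | 0 ≤ ε 0 ω}
            * ((1 - Q {ω | ε 0 ω < -(I / 4)}) ^ (k - 1) * Q (ε 0 ⁻¹' Set.Ici (-(I/4)))) := by
          ring
      _ = Q {ω | 0 ≤ ε 0 ω} * (1 - Q {ω | ε 0 ω < -(I / 4)}) ^ ((k+1) - 1) := by
          rw [hq1, ← pow_succ, hkk, Nat.add_sub_cancel]
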